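/- Let X be a Tychonoff (completely regular Hausdorff) space. The following are equivalent for the space C(X) equipped with the graph topology τ_Γ: (1) (C(X), τ_Γ) is second countable; (2) (C(X), τ_Γ) has a countable network; (3) (C(X), τ_Γ) is separable; (4) (C(X), τ_Γ) satisfies the countable chain condition (every pairwise disjoint family of nonempty open sets is countable); (5) X is compact and metrizable. -/

import Mathlib

open TopologicalSpace Set

/-- The graph of a continuous map, as a subset of `X × Y`. -/
def graphSet {X Y : Type*} [TopologicalSpace X] [TopologicalSpace Y] (f : C(X, Y)) :
    Set (X × Y) := {p | p.2 = f p.1}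

/-- The graph topology `τ_Γ` on `C(X, Y)`, generated by the sets
`F_G = {f | graph f ⊆ G}` for `G` open in `X × Y`. -/
def graphTopology (X Y : Type*) [TopologicalSpace X] [TopologicalSpace Y] :
    TopologicalSpace C(X, Y) :=
  generateFrom {S | ∃ G : Set (X × Y), IsOpen G ∧ S = {f : C(X, Y) | graphSet f ⊆ G}}

/-- A topological space has a countable network if there is a countable family `N`
of subsets such that every open set containing a point `z` contains some member of
`N` containing `z`. -/
def HasCountableNetwork (Z : Type*) [TopologicalSpace Z] : Prop :=
  ∃ N : Set (Set Z), N.Countable ∧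
    ∀ (z : Z) (U : Set Z), IsOpen U → z ∈ U → ∃ M ∈ N, z ∈ M ∧ M ⊆ U

/-- A topological space satisfies the countable chain condition if every pairwise
disjoint family of nonempty open sets is countable. -/
def CCC (Z : Type*) [TopologicalSpace Z] : Prop :=
  ∀ 𝒜 : Set (Set Z), (∀ A ∈ 𝒜, IsOpen A ∧ A.Nonempty) →
    𝒜.Pairwise (Disjoint · ·) → 𝒜.Countable

open Topology Filter

section
variable {X : Type*} [TopologicalSpace X]

lemma isOpen_uball (f : C(X, ℝ)) (ε : ℝ) :
    IsOpen[graphTopology X ℝ] {g : C(X, ℝ) | ∀ x, |g x - f x| < ε} := by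
  have hG : IsOpen {p : X × ℝ | |p.2 - f p.1| < ε} := by
    have : Continuous fun p : X × ℝ => |p.2 - f p.1| :=
      (continuous_snd.sub (f.continuous.comp continuous_fst)).abs
    exact isOpen_lt this continuous_const
  refine TopologicalSpace.GenerateOpen.basic _ ⟨_, hG, ?_⟩
  ext g
  simp only [mem_setOf_eq]
  constructor
  · intro h p hp
    have hp2 : (p.2 : ℝ) = g p.1 := hp
    simp only [mem_setOf_eq, hp2]
    exact h p.1
  · intro h x
    simpa using h (show ((x, g x) : X × ℝ) ∈ graphSet g from rfl)


lemma network_of_secondCountable (Z : Type*) [TopologicalSpace Z]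
    [SecondCountableTopology Z] : HasCountableNetwork Z := by
  obtain ⟨B, hBc, -, hB⟩ := TopologicalSpace.exists_countable_basis Z
  exact ⟨B, hBc, fun z U hU hz => hB.exists_subset_of_mem_open hz hU⟩

lemma separable_of_network (Z : Type*) [TopologicalSpace Z]
    (h : HasCountableNetwork Z) : SeparableSpace Z := by
  rcases isEmpty_or_nonempty Z with hZ | hZ
  · exact ⟨⟨∅, countable_empty, by simp [dense_iff_inter_open, Set.eq_empty_of_isEmpty]⟩⟩
  obtain ⟨N, hNc, hN⟩ := h
  classical
  inhabit Z
  let c : Set Z → Z := fun M => if h : M.Nonempty then h.choose else default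
  refine ⟨⟨c '' N, hNc.image c, ?_⟩⟩
  rw [dense_iff_inter_open]
  rintro U hU ⟨z, hz⟩
  obtain ⟨M, hMN, hzM, hMU⟩ := hN z U hU hz
  have hMne : M.Nonempty := ⟨z, hzM⟩
  refine ⟨c M, hMU (by simp only [c, dif_pos hMne]; exact hMne.choose_spec), mem_image_of_mem c hMN⟩

lemma ccc_of_separable (Z : Type*) [TopologicalSpace Z]
    (h : SeparableSpace Z) : CCC Z := by
  obtain ⟨D, hDc, hDd⟩ := h.1
  intro 𝒜 hopen hdisj
  classical
  rcases isEmpty_or_nonempty Z with hZ | hZ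
  · have : 𝒜 ⊆ {∅, univ} := by
      intro A _
      rcases eq_empty_or_nonempty A with rfl | ⟨z, _⟩
      · exact .inl rfl
      · exact (IsEmpty.false z).elim
    exact ((countable_singleton ∅).insert univ).mono (by exact fun A hA => by simpa [or_comm] using this hA)
  have hsel : ∀ A : Set Z, ∃ d, A ∈ 𝒜 → d ∈ D ∩ A := fun A => by
    by_cases hA : A ∈ 𝒜
    · obtain ⟨hAo, hAne⟩ := hopen A hA
      obtain ⟨d, hd1, hd2⟩ := hDd.inter_open_nonempty A hAo hAne
      exact ⟨d, fun _ => ⟨hd2, hd1⟩⟩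
    · exact ⟨hZ.some, fun h => absurd h hA⟩
  choose sel hsel' using hsel
  have hinj : InjOn sel 𝒜 := by
    intro A hA B hB hAB
    by_contra hne
    have h1 := hsel' A hA
    have h2 := hsel' B hB
    rw [hAB] at h1
    exact (hdisj hA hB hne).ne_of_mem h1.2 h2.2 rfl
  have : (sel '' 𝒜).Countable := hDc.mono (by rintro _ ⟨A, hA, rfl⟩; exact (hsel' A hA).1)
  exact countable_of_injective_of_countable_image hinj this

lemma bounded_of_ccc (h : @CCC C(X, ℝ) (graphTopology X ℝ)) (f : C(X, ℝ)) :
    ∃ B, ∀ x, |f x| ≤ B := by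
  by_contra hb
  push_neg at hb
  set V : ℝ → Set C(X, ℝ) := fun c => {g | ∀ x, |g x - (c • f) x| < 1} with hV
  have hopen : ∀ c, IsOpen[graphTopology X ℝ] (V c) := fun c => isOpen_uball (c • f) 1
  have hmem : ∀ c, c • f ∈ V c := fun c x => by simp
  have hdisj : ∀ c c', c ≠ c' → Disjoint (V c) (V c') := by
    intro c c' hne
    rw [Set.disjoint_left]
    intro g hg hg'
    have hcc : 0 < |c - c'| := abs_pos.2 (sub_ne_zero.2 hne)
    obtain ⟨x, hx⟩ := hb (2 / |c - c'|)
    have h1 := hg x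
    have h2 := hg' x
    have h1' : |g x - c * f x| < 1 := by simpa using h1
    have h2' : |g x - c' * f x| < 1 := by simpa using h2
    have key : |c - c'| * |f x| < 2 := by
      calc |c - c'| * |f x| = |(c - c') * f x| := (abs_mul _ _).symm
        _ = |(g x - c' * f x) - (g x - c * f x)| := by congr 1; ring
        _ ≤ |g x - c' * f x| + |g x - c * f x| := abs_sub _ _
        _ < 2 := by linarith
    have : 2 < |c - c'| * |f x| := by
      rw [div_lt_iff₀ hcc] at hx
      nlinarith
    linarith
  have hinj : Function.Injective V := by
    intro c c' hVe
    by_contra hne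
    exact Set.disjoint_left.mp (hdisj c c' hne) (hmem c) (hVe ▸ hmem c)
  have hcount := h (range V)
    (by rintro A ⟨c, rfl⟩; exact ⟨hopen c, ⟨c • f, hmem c⟩⟩)
    (by rintro A ⟨c, rfl⟩ B ⟨c', rfl⟩ hne; exact hdisj c c' fun hcc => hne (by rw [hcc]))
  have : (univ : Set ℝ).Countable := by
    have := hcount.preimage hinj
    simpa [Set.preimage_range] using this
  exact Cardinal.not_countable_real this
/-- separated sets at scale δ -/
def EpsSep (δ : ℝ) (S : Set C(X, ℝ)) : Prop :=
  S.Pairwise fun f g => ∃ x, δ ≤ |f x - g x|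

lemma unif_separable_of_ccc (h : @CCC C(X, ℝ) (graphTopology X ℝ)) :
    ∃ D : Set C(X, ℝ), D.Countable ∧
      ∀ f : C(X, ℝ), ∀ ε : ℝ, 0 < ε → ∃ g ∈ D, ∀ x, |f x - g x| < ε := by
  have key : ∀ n : ℕ, ∃ S : Set C(X, ℝ),
      Maximal (· ∈ {S | EpsSep (1 / (n + 1)) S}) S ∧ S.Countable := by
    intro n
    set δ : ℝ := 1 / (n + 1) with hδ
    have hδpos : 0 < δ := by positivity
    have hchainub : ∀ c ⊆ {S : Set C(X, ℝ) | EpsSep δ S}, IsChain (· ⊆ ·) c →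
        ∃ ub ∈ {S : Set C(X, ℝ) | EpsSep δ S}, ∀ s ∈ c, s ⊆ ub := by
      intro c hc hchain
      refine ⟨⋃₀ c, ?_, fun s hs => subset_sUnion_of_mem hs⟩
      intro f hf g hg hne
      obtain ⟨s, hsc, hfs⟩ := hf
      obtain ⟨t, htc, hgt⟩ := hg
      rcases hchain.total hsc htc with hst | hts
      · exact (hc htc) (hst hfs) hgt hne
      · exact (hc hsc) hfs (hts hgt) hne
    obtain ⟨S, hS⟩ := zorn_subset {S : Set C(X, ℝ) | EpsSep δ S} hchainub
    refine ⟨S, hS, ?_⟩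
    -- countability from CCC
    set B : C(X, ℝ) → Set C(X, ℝ) := fun f => {g | ∀ x, |g x - f x| < δ / 2} with hB
    have hmem : ∀ f, f ∈ B f := fun f x => by simpa using half_pos hδpos
    have hdisj : ∀ f ∈ S, ∀ g ∈ S, f ≠ g → Disjoint (B f) (B g) := by
      intro f hf g hg hne
      obtain ⟨x, hx⟩ := hS.prop hf hg hne
      rw [Set.disjoint_left]
      intro u hu hu'
      have h1 := hu x
      have h2 := hu' x
      have : |f x - g x| < δ := by
        calc |f x - g x| = |(u x - g x) - (u x - f x)| := by congr 1; ring
          _ ≤ |u x - g x| + |u x - f x| := abs_sub _ _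
          _ < δ := by linarith
      linarith
    have hcnt := h (B '' S) ?opn ?pairwise
    case opn =>
      rintro A ⟨f, hf, rfl⟩
      exact ⟨isOpen_uball f (δ / 2), ⟨f, hmem f⟩⟩
    case pairwise =>
      rintro A ⟨f, hf, rfl⟩ B' ⟨g, hg, rfl⟩ hne
      exact hdisj f hf g hg (fun he => hne (by rw [he]))
    refine countable_of_injective_of_countable_image ?_ hcnt
    intro f hf g hg he
    by_contra hne
    exact Set.disjoint_left.mp (hdisj f hf g hg hne) (hmem f) (he ▸ hmem f)
  choose S hSmax hScnt using key
  refine ⟨⋃ n, S n, countable_iUnion hScnt, ?_⟩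
  intro f ε hε
  obtain ⟨n, hn⟩ := exists_nat_one_div_lt hε
  by_cases hf : f ∈ S n
  · exact ⟨f, mem_iUnion.2 ⟨n, hf⟩, fun x => by simpa using hε⟩
  · have hnot : ¬ EpsSep (1 / (n + 1)) (insert f (S n)) := by
      intro hsep
      exact hf (((hSmax n).2 (y := insert f (S n)) hsep (subset_insert _ _)) (mem_insert _ _))
    haveI : Std.Symm (fun f g : C(X, ℝ) => ∃ x, 1 / ((n : ℝ) + 1) ≤ |f x - g x|) := by
      refine ⟨?_⟩
      · intro a b ⟨x, hx⟩
        exact ⟨x, by rwa [abs_sub_comm]⟩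
    rw [EpsSep, Set.pairwise_insert_of_symm] at hnot
    · push_neg at hnot
      obtain ⟨g, hg, hne, hfar⟩ := hnot ((hSmax n).prop)
      exact ⟨g, mem_iUnion.2 ⟨n, hg⟩, fun x => lt_of_lt_of_le (hfar x) (le_of_lt hn)⟩
lemma metrizable_of_unifdense {X : Type*} [TopologicalSpace X] [T35Space X]
    (D : Set C(X, ℝ)) (hDc : D.Countable)
    (hdense : ∀ f : C(X, ℝ), ∀ ε : ℝ, 0 < ε → ∃ g ∈ D, ∀ x, |f x - g x| < ε) :
    MetrizableSpace X := by
  haveI : Countable ↥D := hDc.to_subtype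
  set e : X → (↥D → ℝ) := fun x g => (g : C(X, ℝ)) x with he
  have key : ∀ U : Set X, IsOpen U → ∀ x ∈ U,
      ∃ W : Set (↥D → ℝ), IsOpen W ∧ x ∈ e ⁻¹' W ∧ e ⁻¹' W ⊆ U := by
    intro U hU x hx
    obtain ⟨f, hf, hf0, hf1⟩ := CompletelyRegularSpace.completely_regular x Uᶜ
      hU.isClosed_compl (by simpa using hx)
    set fc : C(X, ℝ) := ⟨fun y => (f y : ℝ), continuous_subtype_val.comp hf⟩ with hfc
    obtain ⟨g, hgD, hg⟩ := hdense fc (1/3) (by norm_num)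
    refine ⟨{u | u ⟨g, hgD⟩ < 2/3}, isOpen_Iio.preimage (continuous_apply _), ?_, ?_⟩
    · have := hg x
      have hfx : fc x = 0 := by simp [hfc, hf0]
      simp only [mem_preimage, mem_setOf_eq, he]
      rw [hfx] at this
      have : |g x| < 1/3 := by simpa [abs_sub_comm] using this
      calc g x ≤ |g x| := le_abs_self _
        _ < 2/3 := by linarith
    · intro y hy
      by_contra hyU
      have hfy : fc y = 1 := by simp [hfc, hf1 (mem_compl hyU)]
      have h1 := hg y
      rw [hfy] at h1
      have : (2:ℝ)/3 < g y := by
        have := abs_lt.mp h1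
        linarith [this.1, this.2]
      simp only [mem_preimage, mem_setOf_eq, he] at hy
      linarith
  have hinj : Function.Injective e := by
    intro x y hxy
    by_contra hne
    obtain ⟨W, hW, hxW, hWU⟩ := key {y}ᶜ isOpen_compl_singleton x (by simpa using hne)
    have : y ∈ e ⁻¹' W := by simpa [mem_preimage, ← hxy] using hxW
    exact (hWU this) rfl
  have hcont : Continuous e := continuous_pi fun g => (g : C(X, ℝ)).continuous
  have hind : IsInducing e := by
    refine ⟨le_antisymm (continuous_iff_le_induced.mp hcont) ?_⟩
    intro U hU
    choose W hWo hxW hWU using key U hU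
    have hU2 : U = ⋃₀ {V | ∃ x, ∃ hx : x ∈ U, V = e ⁻¹' (W x hx)} := by
      apply subset_antisymm
      · intro y hy
        exact ⟨e ⁻¹' (W y hy), ⟨y, hy, rfl⟩, hxW y hy⟩
      · rintro y ⟨V, ⟨x, hx, rfl⟩, hyV⟩
        exact hWU x hx hyV
    rw [hU2]
    apply (TopologicalSpace.induced e inferInstance).isOpen_sUnion
    rintro V ⟨x, hx, rfl⟩
    exact ⟨W x hx, hWo x hx, rfl⟩
  exact (IsEmbedding.mk hind hinj).metrizableSpace

lemma compact_of_metrizable_bounded {X : Type*} [TopologicalSpace X] [MetrizableSpace X]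
    (hb : ∀ f : C(X, ℝ), ∃ B, ∀ x, |f x| ≤ B) : CompactSpace X := by
  letI : MetricSpace X := TopologicalSpace.metrizableSpaceMetric X
  by_contra hc
  rw [compactSpace_iff_seqCompactSpace, seqCompactSpace_iff] at hc
  rw [IsSeqCompact] at hc
  push_neg at hc
  obtain ⟨u, -, hu⟩ := hc
  have claim1 : ∀ a : X, ∃ V ∈ 𝓝 a, {n | u n ∈ V}.Finite := by
    intro a
    by_contra hcl
    push_neg at hcl
    have hcp : MapClusterPt a atTop u := by
      rw [mapClusterPt_iff_frequently]
      intro s hs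
      rw [Nat.frequently_atTop_iff_infinite]
      exact hcl s hs
    obtain ⟨ψ, hψ, hten⟩ := TopologicalSpace.FirstCountableTopology.tendsto_subseq hcp
    exact hu a (mem_univ a) ψ hψ hten
  have claim2 : ∀ a : X, ∃ V : Set X, IsOpen V ∧ a ∈ V ∧ V ∩ range u ⊆ {a} := by
    intro a
    obtain ⟨V, hV, hVfin⟩ := claim1 a
    obtain ⟨V₀, hV₀V, hV₀o, haV₀⟩ := mem_nhds_iff.mp hV
    refine ⟨V₀ \ ((u '' {n | u n ∈ V}) \ {a}),
      hV₀o.sdiff (((hVfin.image u).diff).isClosed), ⟨haV₀, fun h => h.2 rfl⟩, ?_⟩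
    rintro y ⟨⟨hyV₀, hyS⟩, n, rfl⟩
    by_contra hne
    exact hyS ⟨⟨n, hV₀V hyV₀, rfl⟩, hne⟩
  have fibfin : ∀ a : X, {n | u n = a}.Finite := by
    intro a
    obtain ⟨V, hV, hVfin⟩ := claim1 a
    exact hVfin.subset fun n hn => by rw [mem_setOf_eq, hn]; exact mem_of_mem_nhds hV
  have hTcl : IsClosed (range u) := by
    rw [← isOpen_compl_iff, isOpen_iff_forall_mem_open]
    intro a ha
    obtain ⟨V, hVo, haV, hVT⟩ := claim2 a
    refine ⟨V, fun y hy hyr => ha ?_, hVo, haV⟩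
    have h1 := hVT ⟨hy, hyr⟩
    rw [mem_singleton_iff] at h1
    rwa [← h1]
  have hTinf : (range u).Infinite := by
    intro hTfin
    have hfin : (univ : Set ℕ).Finite := by
      refine Set.Finite.subset (hTfin.biUnion fun a _ => fibfin a) ?_
      intro n _
      exact mem_biUnion ⟨n, rfl⟩ rfl
    exact Set.infinite_univ hfin
  haveI : DiscreteTopology ↥(range u) := by
    rw [discreteTopology_iff_isOpen_singleton]
    intro t
    obtain ⟨V, hVo, haV, hVT⟩ := claim2 t.val
    have hset : {t} = (Subtype.val ⁻¹' V : Set ↥(range u)) := by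
      ext s
      simp only [mem_singleton_iff, mem_preimage, Subtype.ext_iff]
      constructor
      · intro h; rw [h]; exact haV
      · intro h; exact hVT ⟨h, s.2⟩
    rw [hset]
    exact hVo.preimage continuous_subtype_val
  let emb : ℕ ↪ ↥(range u) := hTinf.natEmbedding
  let h : C(↥(range u), ℝ) :=
    ⟨Function.extend emb (fun n => (n : ℝ)) 0, continuous_of_discreteTopology⟩
  obtain ⟨g, hg⟩ := ContinuousMap.exists_restrict_eq hTcl h
  obtain ⟨B, hB⟩ := hb g
  obtain ⟨n, hn⟩ := exists_nat_gt B
  have hval : g ((emb n : ↥(range u)) : X) = n := by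
    have := DFunLike.congr_fun hg (emb n)
    rw [ContinuousMap.restrict_apply] at this
    rw [this]
    simp only [h, ContinuousMap.coe_mk]
    exact emb.injective.extend_apply _ _ _
  have := hB ((emb n : ↥(range u)) : X)
  rw [hval] at this
  have : (n : ℝ) ≤ B := le_trans (le_abs_self _) this
  linarith

lemma graphTopology_eq_compactOpen [CompactSpace X] [MetrizableSpace X] :
    graphTopology X ℝ = (inferInstance : TopologicalSpace C(X, ℝ)) := by
  letI : MetricSpace X := TopologicalSpace.metrizableSpaceMetric X
  apply le_antisymm
  · -- graphTopology ≤ instance : every instance-open is graph-open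
    intro U hU
    rw [Metric.isOpen_iff] at hU
    choose ε hε hball using hU
    set W : ∀ f : C(X, ℝ), f ∈ U → Set C(X, ℝ) :=
      fun f hf => {g | ∀ x, |g x - f x| < ε f hf / 2} with hW
    have hWU : ∀ f hf, W f hf ⊆ U := by
      intro f hf g hg
      apply hball f hf
      rw [Metric.mem_ball]
      have : dist g f ≤ ε f hf / 2 := by
        rw [ContinuousMap.dist_le (half_pos (hε f hf)).le]
        intro x
        rw [Real.dist_eq]
        exact (hg x).le
      exact lt_of_le_of_lt this (half_lt_self (hε f hf))
    have hU2 : U = ⋃₀ {V | ∃ f, ∃ hf : f ∈ U, V = W f hf} := by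
      apply subset_antisymm
      · intro f hf
        exact ⟨W f hf, ⟨f, hf, rfl⟩, fun x => by simpa using half_pos (hε f hf)⟩
      · rintro g ⟨V, ⟨f, hf, rfl⟩, hgV⟩
        exact hWU f hf hgV
    rw [hU2]
    apply (graphTopology X ℝ).isOpen_sUnion
    rintro V ⟨f, hf, rfl⟩
    exact isOpen_uball f (ε f hf / 2)
  · rw [graphTopology, le_generateFrom_iff_subset_isOpen]
    rintro S ⟨G, hG, rfl⟩
    rw [mem_setOf_eq, Metric.isOpen_iff]
    intro f hf
    have hgr : IsCompact (graphSet f) := by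
      have : graphSet f = range (fun x => (x, f x)) := by
        ext p
        constructor
        · intro hp
          exact ⟨p.1, by rw [Prod.ext_iff]; exact ⟨rfl, (hp : p.2 = f p.1).symm⟩⟩
        · rintro ⟨x, rfl⟩; rfl
      rw [this, ← image_univ]
      exact isCompact_univ.image (continuous_id.prodMk f.continuous)
    obtain ⟨δ, hδ, hsub⟩ := hgr.exists_thickening_subset_open hG hf
    refine ⟨δ, hδ, ?_⟩
    intro g hg p hp
    apply hsub
    rw [Metric.mem_thickening_iff]
    refine ⟨(p.1, f p.1), rfl, ?_⟩
    have hp2 : p.2 = g p.1 := hp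
    have h1 : dist (g p.1) (f p.1) ≤ dist g f := ContinuousMap.dist_apply_le_dist _
    rw [Metric.mem_ball] at hg
    calc dist p (p.1, f p.1) = dist p.2 (f p.1) := by
          rw [Prod.dist_eq]; simp [dist_self, dist_nonneg]
      _ = dist (g p.1) (f p.1) := by rw [hp2]
      _ < δ := lt_of_le_of_lt h1 hg
  
lemma secondCountable_graphTopology (hc : CompactSpace X) (hm : MetrizableSpace X) :
    @SecondCountableTopology C(X, ℝ) (graphTopology X ℝ) := by
  letI : MetricSpace X := TopologicalSpace.metrizableSpaceMetric X
  rw [graphTopology_eq_compactOpen]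
  infer_instance
end


/-- for a Tychonoff space `X`, the following are equivalent for
`(C(X), τ_Γ)`: second countable; countable network; separable; countable chain
condition; `X` compact and metrizable. -/
theorem tfae_graphTopology_secondCountable (X : Type*) [TopologicalSpace X]
    [T35Space X] :
    List.TFAE
      [ @SecondCountableTopology C(X, ℝ) (graphTopology X ℝ),
        @HasCountableNetwork C(X, ℝ) (graphTopology X ℝ),
        @SeparableSpace C(X, ℝ) (graphTopology X ℝ),
        @CCC C(X, ℝ) (graphTopology X ℝ),
        (CompactSpace X ∧ MetrizableSpace X) ] := by
  tfae_have 1 → 2 := fun h => @network_of_secondCountable C(X, ℝ) (graphTopology X ℝ) h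
  tfae_have 2 → 3 := fun h => @separable_of_network C(X, ℝ) (graphTopology X ℝ) h
  tfae_have 3 → 4 := fun h => @ccc_of_separable C(X, ℝ) (graphTopology X ℝ) h
  tfae_have 4 → 5 := by
    intro h4
    have hbdd : ∀ f : C(X, ℝ), ∃ B, ∀ x, |f x| ≤ B := fun f => bounded_of_ccc h4 f
    obtain ⟨D, hDc, hdense⟩ := unif_separable_of_ccc h4
    have hm : MetrizableSpace X := metrizable_of_unifdense D hDc hdense
    have hcpt : CompactSpace X := compact_of_metrizable_bounded hbdd
    exact ⟨hcpt, hm⟩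
  tfae_have 5 → 1 := fun ⟨hc, hm⟩ => secondCountable_graphTopology hc hm
  tfae_finish
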